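/- Let X = ξ∂ₓ + η∂_y be a vector field of the form (a₀ + a₁₁x + a₁₂y)∂ₓ + (b₀ + a₂₁x + a₂₂y)∂_y + (c₁x + c₂y)(x∂ₓ + y∂_y) on ℝ², and let X⁽¹⁾ = ξ∂ₓ + η∂_y + ζ∂_p be its prolongation with ζ = η_x + p(η_y - ξ_x) - p²ξ_y. Lift X⁽¹⁾ to the bundle ℝ⁵(x,y,p,f,g) → ℝ³(x,y,p) by adding components (ζ_p f + ζ_y g + ζ_x − (ξ_p f + ξ_y g + ξ_x)f)∂_f + (η_p f + η_y g + η_x − (ξ_p f + ξ_y g + ξ_x)g)∂_g. Then the function I₀ = p − g satisfies X̂(I₀) = μ·I₀ where μ = −a₁₁ + a₂₂ − a₁₂(p+g) − c₁x + c₂(y − x(p+g)); in particular I₀ is a relative invariant of the 𝔰𝔩₃-action. -/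

import Mathlib

/-- Partial derivatives of a function on ℝ³(x,y,p). -/
noncomputable def pdx3 (F : ℝ × ℝ × ℝ → ℝ) (q : ℝ × ℝ × ℝ) : ℝ :=
  deriv (fun t => F (t, q.2.1, q.2.2)) q.1
noncomputable def pdy3 (F : ℝ × ℝ × ℝ → ℝ) (q : ℝ × ℝ × ℝ) : ℝ :=
  deriv (fun t => F (q.1, t, q.2.2)) q.2.1
noncomputable def pdp3 (F : ℝ × ℝ × ℝ → ℝ) (q : ℝ × ℝ × ℝ) : ℝ :=
  deriv (fun t => F (q.1, q.2.1, t)) q.2.2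

/-- The ξ-component of the 𝔰𝔩₃ vector field, viewed on ℝ³(x,y,p) (it does not depend on p). -/
def Xi (a₀ a₁₁ a₁₂ c₁ c₂ : ℝ) : ℝ × ℝ × ℝ → ℝ :=
  fun q => a₀ + a₁₁ * q.1 + a₁₂ * q.2.1 + (c₁ * q.1 + c₂ * q.2.1) * q.1

/-- The η-component of the 𝔰𝔩₃ vector field, viewed on ℝ³(x,y,p). -/
def Eta (b₀ a₂₁ a₂₂ c₁ c₂ : ℝ) : ℝ × ℝ × ℝ → ℝ :=
  fun q => b₀ + a₂₁ * q.1 + a₂₂ * q.2.1 + (c₁ * q.1 + c₂ * q.2.1) * q.2.1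

/-- The contact prolongation component `ζ = η_x + p(η_y − ξ_x) − p²ξ_y`. -/
noncomputable def Zeta (a₀ a₁₁ a₁₂ b₀ a₂₁ a₂₂ c₁ c₂ : ℝ) : ℝ × ℝ × ℝ → ℝ :=
  fun q => pdx3 (Eta b₀ a₂₁ a₂₂ c₁ c₂) q
    + q.2.2 * (pdy3 (Eta b₀ a₂₁ a₂₂ c₁ c₂) q - pdx3 (Xi a₀ a₁₁ a₁₂ c₁ c₂) q)
    - q.2.2 ^ 2 * pdy3 (Xi a₀ a₁₁ a₁₂ c₁ c₂) q

/-- for the lift `X̂` of the prolonged 𝔰𝔩₃ field to ℝ⁵(x,y,p,f,g), with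
∂_g-component `η_p f + η_y g + η_x − (ξ_p f + ξ_y g + ξ_x)g`, the function `I₀ = p − g`
satisfies `X̂(I₀) = μ · I₀` with `μ = −a₁₁ + a₂₂ − a₁₂(p+g) − c₁x + c₂(y − x(p+g))`.
Since `I₀` depends only on `p` and `g`, `X̂(I₀) = ζ − (∂_g-component)`. -/
theorem I0_relative_invariant (a₀ a₁₁ a₁₂ b₀ a₂₁ a₂₂ c₁ c₂ : ℝ) (x y p f g : ℝ) :
    Zeta a₀ a₁₁ a₁₂ b₀ a₂₁ a₂₂ c₁ c₂ (x, y, p)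
      - (pdp3 (Eta b₀ a₂₁ a₂₂ c₁ c₂) (x, y, p) * f + pdy3 (Eta b₀ a₂₁ a₂₂ c₁ c₂) (x, y, p) * g
          + pdx3 (Eta b₀ a₂₁ a₂₂ c₁ c₂) (x, y, p)
        - (pdp3 (Xi a₀ a₁₁ a₁₂ c₁ c₂) (x, y, p) * f + pdy3 (Xi a₀ a₁₁ a₁₂ c₁ c₂) (x, y, p) * g
          + pdx3 (Xi a₀ a₁₁ a₁₂ c₁ c₂) (x, y, p)) * g)
    = (-a₁₁ + a₂₂ - a₁₂ * (p + g) - c₁ * x + c₂ * (y - x * (p + g))) * (p - g) := by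
  have hxX : pdx3 (Xi a₀ a₁₁ a₁₂ c₁ c₂) (x, y, p) = a₁₁ + 2*c₁*x + c₂*y := by
    have h := (((hasDerivAt_const x a₀).add ((hasDerivAt_id x).const_mul a₁₁)).add
      (hasDerivAt_const x (a₁₂*y))).add
      ((((hasDerivAt_id x).const_mul c₁).add (hasDerivAt_const x (c₂*y))).mul (hasDerivAt_id x))
    simp only [id_eq] at h
    simp only [pdx3, Xi]
    exact h.deriv.trans (by simp only [Pi.add_apply]; ring)
  have hyX : pdy3 (Xi a₀ a₁₁ a₁₂ c₁ c₂) (x, y, p) = a₁₂ + c₂*x := by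
    have h := (((hasDerivAt_const y (a₀ + a₁₁*x)).add ((hasDerivAt_id y).const_mul a₁₂)).add
      (((hasDerivAt_const y (c₁*x)).add ((hasDerivAt_id y).const_mul c₂)).const_mul x))
    simp only [id_eq] at h
    simp only [pdy3, Xi]
    have h2 : (fun t : ℝ => a₀ + a₁₁*x + a₁₂*t + (c₁*x + c₂*t)*x)
        = fun t : ℝ => a₀ + a₁₁*x + a₁₂*t + x*(c₁*x + c₂*t) := by funext t; ring
    rw [show (fun t : ℝ => a₀ + a₁₁ * x + a₁₂ * t + (c₁ * x + c₂ * t) * x)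
        = fun t : ℝ => a₀ + a₁₁ * x + a₁₂ * t + x * (c₁ * x + c₂ * t) from h2]; exact h.deriv.trans (by ring)
  have hpX : pdp3 (Xi a₀ a₁₁ a₁₂ c₁ c₂) (x, y, p) = 0 := by
    simp [pdp3, Xi]
  have hxE : pdx3 (Eta b₀ a₂₁ a₂₂ c₁ c₂) (x, y, p) = a₂₁ + c₁*y := by
    have h := (((hasDerivAt_const x b₀).add ((hasDerivAt_id x).const_mul a₂₁)).add
      (hasDerivAt_const x (a₂₂*y))).add
      ((((hasDerivAt_id x).const_mul c₁).add (hasDerivAt_const x (c₂*y))).mul (hasDerivAt_const x y))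
    simp only [id_eq] at h
    simp only [pdx3, Eta]
    exact h.deriv.trans (by simp only [Pi.add_apply]; ring)
  have hyE : pdy3 (Eta b₀ a₂₁ a₂₂ c₁ c₂) (x, y, p) = a₂₂ + c₁*x + 2*c₂*y := by
    have h := (((hasDerivAt_const y (b₀ + a₂₁*x)).add ((hasDerivAt_id y).const_mul a₂₂)).add
      (((hasDerivAt_const y (c₁*x)).add ((hasDerivAt_id y).const_mul c₂)).mul (hasDerivAt_id y)))
    simp only [id_eq] at h
    simp only [pdy3, Eta]
    exact h.deriv.trans (by simp only [Pi.add_apply]; ring)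
  have hpE : pdp3 (Eta b₀ a₂₁ a₂₂ c₁ c₂) (x, y, p) = 0 := by
    simp [pdp3, Eta]
  simp only [Zeta, hxX, hyX, hpX, hxE, hyE, hpE]
  ring
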